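/- Let z ∈ (0,1), let λ > 0, let q be a real number with q ≥ max{1, (2z/λ)^{1/(1−z)}} and λ ≤ q^z, and let m ≥ 0 be an integer. Then ∑_{i=0}^{m−1} (i + q)^{−2z} · ∏_{j=i+1}^{m−1} (1 − λ·(j + q)^{−z}) ≤ (2/λ) · (m + q)^{−z}. -/

import Mathlib

/-- One-step decrement bound: for `0 < z < 1` and `c ≥ 1`,
`c^(-z) - (c+1)^(-z) ≤ z * c^(-z-1)`. -/
lemma rpow_decrement_le (z c : ℝ) (hz0 : 0 < z) (hz1 : z < 1) (hc : 1 ≤ c) :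
    c ^ (-z) - (c + 1) ^ (-z) ≤ z * c ^ (-z - 1) := by
  have hc0 : 0 < c := lt_of_lt_of_le one_pos hc
  set t : ℝ := 1 / c with ht
  have ht0 : 0 < t := by positivity
  have ht1 : t ≤ 1 := by rw [ht]; exact (div_le_one hc0).mpr hc
  -- key: (1+t)^(-z) ≥ 1 - z*t
  have key : 1 - z * t ≤ (1 + t) ^ (-z) := by
    rcases le_or_gt (1 - z * t) 0 with h | h
    · exact h.trans (Real.rpow_nonneg (by linarith) _)
    · have hb : (1 + t) ^ z ≤ 1 + z * t :=
        rpow_one_add_le_one_add_mul_self (by linarith) hz0.le hz1.le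
      have hpos : (0:ℝ) < (1 + t) ^ z := Real.rpow_pos_of_pos (by linarith) _
      have hm : (1 - z * t) * (1 + t) ^ z ≤ 1 := by nlinarith [sq_nonneg (z * t)]
      calc 1 - z * t = (1 - z * t) * (1 + t) ^ z / (1 + t) ^ z := by field_simp
        _ ≤ 1 / (1 + t) ^ z := by gcongr
        _ = (1 + t) ^ (-z) := by rw [Real.rpow_neg (by linarith), one_div]
  have hsplit : (c + 1) ^ (-z) = c ^ (-z) * (1 + t) ^ (-z) := by
    rw [← Real.mul_rpow hc0.le (by linarith), mul_add, mul_one, ht,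
      mul_one_div, div_self hc0.ne']
  have hcz : (0:ℝ) < c ^ (-z) := Real.rpow_pos_of_pos hc0 _
  have : c ^ (-z) * (1 - z * t) ≤ (c + 1) ^ (-z) := by
    rw [hsplit]; exact mul_le_mul_of_nonneg_left key hcz.le
  have hrw : c ^ (-z) * (z * t) = z * c ^ (-z - 1) := by
    rw [ht, Real.rpow_sub hc0, Real.rpow_one, mul_one_div]
    ring
  nlinarith [this, hrw]

/-- **Elementary polynomial product-sum estimate.** For `z ∈ (0,1)`, `λ > 0`,
`q ≥ max{1, (2z/λ)^{1/(1−z)}}` with `λ ≤ q^z`, and any integer `m ≥ 0`,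
`∑_{i=0}^{m−1} (i+q)^{−2z} ∏_{j=i+1}^{m−1} (1 − λ (j+q)^{−z}) ≤ (2/λ)(m+q)^{−z}`. -/
theorem product_sum_estimate_polynomial (z lam q : ℝ)
    (hz : z ∈ Set.Ioo (0 : ℝ) 1) (hlam : 0 < lam)
    (hq : max 1 ((2 * z / lam) ^ (1 / (1 - z))) ≤ q) (hlq : lam ≤ q ^ z) (m : ℕ) :
    ∑ i ∈ Finset.range m,
        ((i : ℝ) + q) ^ (-(2 * z)) *
          ∏ j ∈ Finset.Ico (i + 1) m, (1 - lam * ((j : ℝ) + q) ^ (-z))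
      ≤ (2 / lam) * ((m : ℝ) + q) ^ (-z) := by
  obtain ⟨hz0, hz1⟩ := hz
  have hq1 : (1:ℝ) ≤ q := le_trans (le_max_left _ _) hq
  have hq0 : (0:ℝ) < q := lt_of_lt_of_le one_pos hq1
  -- q^(1-z) ≥ 2z/lam
  have hqz : 2 * z / lam ≤ q ^ (1 - z) := by
    have h1 : ((2 * z / lam) ^ (1 / (1 - z))) ^ (1 - z) ≤ q ^ (1 - z) :=
      Real.rpow_le_rpow (Real.rpow_nonneg (by positivity) _)
        (le_trans (le_max_right _ _) hq) (by linarith)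
    rwa [← Real.rpow_mul (by positivity), one_div,
      inv_mul_cancel₀ (by linarith : (1:ℝ) - z ≠ 0), Real.rpow_one] at h1
  induction m with
  | zero =>
    simp only [Finset.range_zero, Finset.sum_empty, Nat.cast_zero, zero_add]
    positivity
  | succ n ih =>
    set x : ℝ := (n : ℝ) + q with hx
    have hx1 : (1:ℝ) ≤ x := by
      have : (0:ℝ) ≤ (n:ℝ) := Nat.cast_nonneg n
      simp only [hx]; linarith
    have hx0 : (0:ℝ) < x := lt_of_lt_of_le one_pos hx1
    have hxq : q ≤ x := by
      have : (0:ℝ) ≤ (n:ℝ) := Nat.cast_nonneg n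
      simp only [hx]; linarith
    set a : ℝ := x ^ (-z) with ha
    have ha0 : 0 < a := Real.rpow_pos_of_pos hx0 _
    -- lam * a ≤ 1
    have hla : lam * a ≤ 1 := by
      have h1 : lam ≤ x ^ z :=
        hlq.trans (Real.rpow_le_rpow hq0.le hxq hz0.le)
      have h2 : a = (x ^ z)⁻¹ := by
        rw [ha, ← Real.rpow_neg hx0.le]
      rw [h2, mul_inv_le_iff₀ (Real.rpow_pos_of_pos hx0 z), one_mul]
      exact h1
    -- rewrite sum at n+1
    have hsum : ∑ i ∈ Finset.range (n + 1),
        ((i : ℝ) + q) ^ (-(2 * z)) *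
          ∏ j ∈ Finset.Ico (i + 1) (n + 1), (1 - lam * ((j : ℝ) + q) ^ (-z))
        = (∑ i ∈ Finset.range n,
            ((i : ℝ) + q) ^ (-(2 * z)) *
              ∏ j ∈ Finset.Ico (i + 1) n, (1 - lam * ((j : ℝ) + q) ^ (-z)))
            * (1 - lam * a) + x ^ (-(2 * z)) := by
      rw [Finset.sum_range_succ, Finset.sum_mul]
      congr 1
      · refine Finset.sum_congr rfl fun i hi => ?_
        rw [Finset.mem_range] at hi
        rw [Finset.prod_Ico_succ_top (by omega : i + 1 ≤ n), mul_assoc]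
      · simp [hx]
    rw [hsum]
    have h1ma : 0 ≤ 1 - lam * a := by linarith
    have step1 : (∑ i ∈ Finset.range n,
            ((i : ℝ) + q) ^ (-(2 * z)) *
              ∏ j ∈ Finset.Ico (i + 1) n, (1 - lam * ((j : ℝ) + q) ^ (-z)))
            * (1 - lam * a) + x ^ (-(2 * z))
        ≤ (2 / lam) * a * (1 - lam * a) + x ^ (-(2 * z)) := by
      have := mul_le_mul_of_nonneg_right ih h1ma
      linarith
    refine step1.trans ?_
    -- x^(-(2z)) = a^2
    have hsq : x ^ (-(2 * z)) = a ^ 2 := by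
      rw [ha, ← Real.rpow_natCast (x ^ (-z)) 2, ← Real.rpow_mul hx0.le]
      norm_num; ring_nf
    rw [hsq]
    -- remains: (2/lam) a (1 - lam a) + a² ≤ (2/lam) b  with b = (n+1+q)^(-z)
    have hcast : ((n + 1 : ℕ) : ℝ) + q = x + 1 := by push_cast; simp [hx]; ring
    rw [hcast]
    set b : ℝ := (x + 1) ^ (-z) with hb
    -- a - b ≤ z x^(-z-1)
    have hdec : a - b ≤ z * x ^ (-z - 1) := rpow_decrement_le z x hz0 hz1 hx1
    -- (2/lam) * z * x^(-z-1) ≤ a^2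
    have hmain : (2 / lam) * (z * x ^ (-z - 1)) ≤ a ^ 2 := by
      have hxe : x ^ (1 - z) * x ^ (-z - 1) = a ^ 2 := by
        rw [ha, ← Real.rpow_natCast (x ^ (-z)) 2, ← Real.rpow_mul hx0.le,
          ← Real.rpow_add hx0]
        norm_num; ring_nf
      have hx1z : 2 * z / lam ≤ x ^ (1 - z) :=
        hqz.trans (Real.rpow_le_rpow hq0.le hxq (by linarith))
      have hxp : (0:ℝ) < x ^ (-z - 1) := Real.rpow_pos_of_pos hx0 _
      calc (2 / lam) * (z * x ^ (-z - 1)) = (2 * z / lam) * x ^ (-z - 1) := by ring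
        _ ≤ x ^ (1 - z) * x ^ (-z - 1) := by
            exact mul_le_mul_of_nonneg_right hx1z hxp.le
        _ = a ^ 2 := hxe
    have hfin : (2 / lam) * (a - b) ≤ a ^ 2 := by
      calc (2 / lam) * (a - b) ≤ (2 / lam) * (z * x ^ (-z - 1)) := by
            apply mul_le_mul_of_nonneg_left hdec; positivity
        _ ≤ a ^ 2 := hmain
    have : (2 / lam) * a * (1 - lam * a) + a ^ 2 = (2 / lam) * a - a ^ 2 := by
      field_simp; ring
    rw [this]
    nlinarith [hfin]
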